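/- For the interval transportation problem with interval cost matrix [C̲, C̄], interval supplies [s̲, s̄] and interval demands [d̲, d̄] (all non-negative), the best optimal value over all feasible scenarios equals f(C̲, s̄, d̲), i.e., it is attained at the scenario with lowest costs, largest supplies and smallest demands, provided this scenario is feasible (sum_i s̄_i >= sum_j d̲_j). -/
import Mathlib


open Finset

/-- A feasible transportation plan for supplies `s` and demands `d`. -/
def IsPlan {m n : ℕ} (s : Fin m → ℝ) (d : Fin n → ℝ) (x : Fin m → Fin n → ℝ) : Prop :=
  (∀ i j, 0 ≤ x i j) ∧ (∀ i, ∑ j, x i j ≤ s i) ∧ (∀ j, ∑ i, x i j = d j)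

/-- Total transportation cost of a plan `x` under cost matrix `C`. -/
def cost {m n : ℕ} (C x : Fin m → Fin n → ℝ) : ℝ :=
  ∑ i, ∑ j, C i j * x i j

/-- Optimal value of the transportation problem with data `(C, s, d)`. -/
noncomputable def optVal {m n : ℕ} (C : Fin m → Fin n → ℝ) (s : Fin m → ℝ)
    (d : Fin n → ℝ) : ℝ :=
  sInf (cost C '' {x | IsPlan s d x})

/-- A feasible plan exists whenever supplies and demands are nonnegative and
total supply covers total demand (proportional plan). -/
lemma plan_exists {m n : ℕ} (s : Fin m → ℝ) (d : Fin n → ℝ)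
    (hs : ∀ i, 0 ≤ s i) (hd : ∀ j, 0 ≤ d j) (h : ∑ j, d j ≤ ∑ i, s i) :
    ∃ x, IsPlan s d x := by
  by_cases hS : ∑ i, s i = 0
  · refine ⟨fun _ _ => 0, fun _ _ => le_refl 0, fun i => by simp [hs i], fun j => ?_⟩
    have hd0 : d j ≤ 0 := by
      calc d j ≤ ∑ j, d j := Finset.single_le_sum (fun j _ => hd j) (Finset.mem_univ j)
        _ ≤ 0 := h.trans_eq hS
    simp [le_antisymm hd0 (hd j)]
  · have hSpos : 0 < ∑ i, s i := lt_of_le_of_ne (Finset.sum_nonneg fun i _ => hs i) (Ne.symm hS)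
    refine ⟨fun i j => s i * d j / ∑ k, s k, fun i j => div_nonneg (mul_nonneg (hs i) (hd j)) hSpos.le, fun i => ?_, fun j => ?_⟩
    · have : ∑ j, s i * d j / ∑ k, s k = s i * (∑ j, d j) / ∑ k, s k := by
        rw [← Finset.sum_div, ← Finset.mul_sum]
      rw [this]
      rw [div_le_iff₀ hSpos]
      calc s i * ∑ j, d j ≤ s i * ∑ i, s i :=
            mul_le_mul_of_nonneg_left h (hs i)
        _ = s i * ∑ k, s k := rfl
    · rw [← Finset.sum_div]
      rw [← Finset.sum_mul]
      field_simp

/-- Every plan for `(s, d)` scales column-wise to a plan for `(su, dl)` with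
no larger cost. -/
lemma scale_plan {m n : ℕ} (Cl C : Fin m → Fin n → ℝ) (s su : Fin m → ℝ)
    (dl d : Fin n → ℝ) (x : Fin m → Fin n → ℝ)
    (hCl : ∀ i j, 0 ≤ Cl i j) (hC : ∀ i j, Cl i j ≤ C i j)
    (hsu : ∀ i, s i ≤ su i) (hdl : ∀ j, 0 ≤ dl j) (hd : ∀ j, dl j ≤ d j)
    (hx : IsPlan s d x) :
    ∃ y, IsPlan su dl y ∧ cost Cl y ≤ cost C x := by
  obtain ⟨hx0, hxs, hxd⟩ := hx
  set y : Fin m → Fin n → ℝ := fun i j => x i j * (dl j / d j) with hy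
  have hratio : ∀ j, 0 ≤ dl j / d j ∧ dl j / d j ≤ 1 := by
    intro j
    rcases eq_or_lt_of_le ((hdl j).trans (hd j)) with h0 | hpos
    · simp [← h0]
    · exact ⟨div_nonneg (hdl j) hpos.le, (div_le_one hpos).mpr (hd j)⟩
  have hy0 : ∀ i j, 0 ≤ y i j := fun i j => mul_nonneg (hx0 i j) (hratio j).1
  have hyx : ∀ i j, y i j ≤ x i j := fun i j => by
    calc y i j = x i j * (dl j / d j) := rfl
      _ ≤ x i j * 1 := mul_le_mul_of_nonneg_left (hratio j).2 (hx0 i j)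
      _ = x i j := mul_one _
  refine ⟨y, ⟨hy0, fun i => ?_, fun j => ?_⟩, ?_⟩
  · calc ∑ j, y i j ≤ ∑ j, x i j := Finset.sum_le_sum fun j _ => hyx i j
      _ ≤ s i := hxs i
      _ ≤ su i := hsu i
  · have : ∑ i, y i j = (∑ i, x i j) * (dl j / d j) := by
      rw [Finset.sum_mul]
    rw [this, hxd j]
    rcases eq_or_lt_of_le ((hdl j).trans (hd j)) with h0 | hpos
    · have : dl j = 0 := le_antisymm (by rw [h0]; exact hd j) (hdl j)
      simp [this]
    · field_simp
  · unfold cost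
    refine Finset.sum_le_sum fun i _ => Finset.sum_le_sum fun j _ => ?_
    exact mul_le_mul (hC i j) (hyx i j) (hy0 i j) ((hCl i j).trans (hC i j))

/-- The best optimal value of the interval transportation problem is attained at
the scenario with lowest costs, largest supplies and smallest demands. -/
theorem best_optimal_value {m n : ℕ} (Cl Cu : Fin m → Fin n → ℝ)
    (sl su : Fin m → ℝ) (dl du : Fin n → ℝ)
    (hCl : ∀ i j, 0 ≤ Cl i j) (hC : ∀ i j, Cl i j ≤ Cu i j)
    (hsl : ∀ i, 0 ≤ sl i) (hs : ∀ i, sl i ≤ su i)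
    (hdl : ∀ j, 0 ≤ dl j) (hd : ∀ j, dl j ≤ du j)
    (hfeas : ∑ j, dl j ≤ ∑ i, su i) :
    IsLeast {v | ∃ (C : Fin m → Fin n → ℝ) (s : Fin m → ℝ) (d : Fin n → ℝ),
        (∀ i j, Cl i j ≤ C i j ∧ C i j ≤ Cu i j) ∧
        (∀ i, sl i ≤ s i ∧ s i ≤ su i) ∧
        (∀ j, dl j ≤ d j ∧ d j ≤ du j) ∧
        ∑ j, d j ≤ ∑ i, s i ∧ v = optVal C s d}
      (optVal Cl su dl) := by
  constructor
  · exact ⟨Cl, su, dl, fun i j => ⟨le_refl _, hC i j⟩,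
      fun i => ⟨hs i, le_refl _⟩, fun j => ⟨le_refl _, hd j⟩, hfeas, rfl⟩
  · rintro v ⟨C, s, d, hCm, hsm, hdm, hsd, rfl⟩
    -- the target set is bounded below by 0
    have hbdd : BddBelow (cost Cl '' {x | IsPlan su dl x}) := by
      refine ⟨0, fun c hc => ?_⟩
      obtain ⟨x, hx, rfl⟩ := hc
      exact Finset.sum_nonneg fun i _ => Finset.sum_nonneg fun j _ =>
        mul_nonneg (hCl i j) (hx.1 i j)
    -- the source set is nonempty
    have hs0 : ∀ i, 0 ≤ s i := fun i => (hsl i).trans (hsm i).1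
    have hd0 : ∀ j, 0 ≤ d j := fun j => (hdl j).trans (hdm j).1
    obtain ⟨x0, hx0⟩ := plan_exists s d hs0 hd0 hsd
    have hne : (cost C '' {x | IsPlan s d x}).Nonempty := ⟨cost C x0, x0, hx0, rfl⟩
    refine le_csInf hne ?_
    rintro c ⟨x, hx, rfl⟩
    obtain ⟨y, hy, hyc⟩ := scale_plan Cl C s su dl d x hCl (fun i j => (hCm i j).1)
      (fun i => (hsm i).2) hdl (fun j => (hdm j).1) hx
    exact (csInf_le hbdd ⟨y, hy, rfl⟩).trans hyc
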